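/- Let G = SL₃(K_ν), Γ = SL₃(O_ν), Ω = G/Γ, and d(t) = diag(t,1,t⁻¹). Let y ∈ Ω be such that the orbit Dy under D = {d(t) : t ∈ K_ν^×} is relatively compact in Ω. Then the stabilizer of y in G intersects the group W of upper triangular unipotent matrices only in the identity. Consequently, for every non-compact closed subgroup U of W, the orbit map U → Uy is not proper, i.e. U/(U ∩ G_y) is not compact. -/

import Mathlib

set_option synthInstance.maxHeartbeats 800000
set_option maxRecDepth 8000
set_option maxHeartbeats 1000000

open Topology

noncomputable section

abbrev Kv (F : Type) [Field F] := LaurentSeries F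

abbrev SL3 (F : Type) [Field F] := Matrix.SpecialLinearGroup (Fin 3) (Kv F)

instance (F : Type) [Field F] : TopologicalSpace (SL3 F) := instTopologicalSpaceSubtype

def theta (F : Type) [Field F] : Kv F := HahnSeries.single (-1) 1

def polyMap (F : Type) [Field F] : Polynomial F →+* Kv F :=
  (Polynomial.aeval (theta F)).toRingHom

def Gamma (F : Type) [Field F] : Subgroup (SL3 F) :=
  (Matrix.SpecialLinearGroup.map (polyMap F)).range

/-- Membership in the group `W` of upper triangular unipotent matrices. -/
def IsUpperUnip (F : Type) [Field F] (g : SL3 F) : Prop :=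
  g.1 0 0 = 1 ∧ g.1 1 1 = 1 ∧ g.1 2 2 = 1 ∧ g.1 1 0 = 0 ∧ g.1 2 0 = 0 ∧ g.1 2 1 = 0

open Filter LaurentSeries HahnSeries Polynomial Multiplicative

local notation "ℤₘ₀" => WithZero (Multiplicative ℤ)

namespace Stmt7Aux

variable (F : Type) [Field F]

/-- Coefficient extraction as an additive monoid hom. -/
def coeffHom (a : ℤ) : Kv F →+ F where
  toFun f := f.coeff a
  map_zero' := rfl
  map_add' f g := by simp [HahnSeries.coeff_add]

lemma val_cases (x : Kv F) (hx : x ≠ 0) :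
    ∃ m : Multiplicative ℤ, Valued.v x = (m : ℤₘ₀) := by
  have h0 : Valued.v x ≠ (0 : ℤₘ₀) := (Valuation.ne_zero_iff _).mpr hx
  obtain ⟨m, hm⟩ : ∃ m : Multiplicative ℤ, (m : ℤₘ₀) = _ := ⟨_, WithZero.coe_unzero h0⟩
  exact ⟨m, hm.symm⟩

lemma nhds_zero_basis : (𝓝 (0 : Kv F)).HasBasis (fun γ : ℤₘ₀ => γ ≠ 0)
    (fun γ => {x : Kv F | Valued.v x < γ}) := by
  refine (Valued.hasBasis_nhds_zero (Kv F) ℤₘ₀).to_hasBasis ?_ ?_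
  · intro γ' _
    refine ⟨MonoidWithZeroHom.ValueGroup₀.embedding γ'.1, ?_, fun x hx => ?_⟩
    · intro h0
      apply γ'.ne_zero
      apply MonoidWithZeroHom.ValueGroup₀.embedding_injective
      rw [h0, map_zero]
    · exact Valued.v.restrict_lt_iff_lt_embedding.mpr hx
  · intro γ hγ
    obtain ⟨x, hx⟩ := LaurentSeries.valuation_surjective F γ
    have hx0 : Valued.v.restrict x ≠ 0 := by
      rw [ne_eq, Valuation.restrict_eq_zero_iff, hx]; exact hγ
    refine ⟨Units.mk0 _ hx0, trivial, fun y hy => ?_⟩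
    simp only [Set.mem_setOf_eq, Units.val_mk0, Valuation.restrict_lt_iff] at hy ⊢
    rwa [hx] at hy

lemma unif_basis : (uniformity (Kv F)).HasBasis (fun γ : ℤₘ₀ => γ ≠ 0)
    (fun γ => {p : Kv F × Kv F | Valued.v (p.2 - p.1) < γ}) := by
  rw [uniformity_eq_comap_nhds_zero]
  exact (nhds_zero_basis F).comap _

lemma val_le_of_lt_one (x : Kv F) (hx : x ≠ 0) (hv : Valued.v x < (1 : ℤₘ₀)) :
    Valued.v x ≤ ↑(Multiplicative.ofAdd (-1 : ℤ)) := by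
  obtain ⟨m, hm⟩ := val_cases F x hx
  rw [hm] at hv ⊢
  rw [← WithZero.coe_one, WithZero.coe_lt_coe] at hv
  rw [WithZero.coe_le_coe]
  have h2 : Multiplicative.toAdd m < 0 := by simpa using Multiplicative.toAdd_lt.mpr hv
  have h3 : Multiplicative.toAdd m ≤ -1 := by omega
  exact Multiplicative.toAdd_le.mp h3

lemma theta_pow (n : ℕ) : (theta F) ^ n = (HahnSeries.single (-(n : ℤ)) (1 : F) : Kv F) := by
  rw [theta, HahnSeries.single_pow, one_pow, nsmul_eq_mul, mul_neg_one]

lemma polyMap_coeff (p : Polynomial F) (n : ℕ) :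
    (polyMap F p).coeff (-(n : ℤ)) = p.coeff n := by
  have h : polyMap F p = ∑ i ∈ Finset.range (p.natDegree + 1),
      (HahnSeries.single (-(i : ℤ)) (p.coeff i) : Kv F) := by
    show Polynomial.aeval (theta F) p = _
    rw [Polynomial.aeval_def, Polynomial.eval₂_eq_sum_range]
    refine Finset.sum_congr rfl fun i _ => ?_
    rw [theta_pow]
    have hC : (algebraMap F (Kv F)) (p.coeff i) = (HahnSeries.single (0 : ℤ) (p.coeff i) : Kv F) := by
      rw [HahnSeries.algebraMap_apply', PowerSeries.algebraMap_apply]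
      simp only [Algebra.algebraMap_self, RingHom.id_apply, HahnSeries.ofPowerSeries_C,
        HahnSeries.C_apply]
    rw [hC, HahnSeries.single_mul_single, zero_add, mul_one]
  have h2 : (polyMap F p).coeff (-(n : ℤ)) = coeffHom F (-(n : ℤ)) (polyMap F p) := rfl
  rw [h2, h, map_sum]
  have h3 : ∀ i : ℕ, coeffHom F (-(n : ℤ)) ((HahnSeries.single (-(i : ℤ)) (p.coeff i) : Kv F))
      = if i = n then p.coeff i else 0 := by
    intro i
    have hh : coeffHom F (-(n : ℤ)) ((HahnSeries.single (-(i : ℤ)) (p.coeff i) : Kv F))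
        = ((HahnSeries.single (-(i : ℤ)) (p.coeff i) : Kv F)).coeff (-(n : ℤ)) := rfl
    rw [hh, HahnSeries.coeff_single]
    by_cases hin : i = n
    · simp [hin]
    · have hne : ¬ (-(n : ℤ) = -(i : ℤ)) := by
        intro hc
        exact hin (by exact_mod_cast (neg_inj.mp hc).symm)
      simp [hne, hin]
  rw [Finset.sum_congr rfl fun i _ => h3 i, Finset.sum_ite_eq' _ n _]
  split_ifs with h4
  · rfl
  · rw [Finset.mem_range, not_lt] at h4
    exact (Polynomial.coeff_eq_zero_of_natDegree_lt (by omega)).symm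

lemma polyMap_eq_zero_of_val_lt (p : Polynomial F) (hv : Valued.v (polyMap F p) < (1 : ℤₘ₀)) :
    p = 0 := by
  by_contra hp
  have hlc : p.coeff p.natDegree ≠ 0 := Polynomial.leadingCoeff_ne_zero.mpr hp
  have hf : polyMap F p ≠ 0 := by
    intro h0
    apply hlc
    have := polyMap_coeff F p p.natDegree
    rw [h0] at this
    simpa using this.symm
  have hle := val_le_of_lt_one F _ hf hv
  have := (LaurentSeries.valuation_le_iff_coeff_lt_eq_zero F (D := 1)).mp
    (by exact hle) (-(p.natDegree : ℤ)) (by omega)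
  rw [polyMap_coeff F p p.natDegree] at this
  exact hlc this

/-- Discreteness of `Γ` : an element of `Γ` all of whose matrix entries are within
valuation `< 1` of the identity matrix is the identity. -/
lemma gamma_discrete (δ : SL3 F) (hδ : δ ∈ Gamma F)
    (hv : ∀ i j, Valued.v (δ.1 i j - (1 : Matrix (Fin 3) (Fin 3) (Kv F)) i j) < (1 : ℤₘ₀)) :
    δ = 1 := by
  obtain ⟨δ₀, rfl⟩ := hδ
  have hδ₀ : δ₀ = 1 := by
    apply Subtype.ext
    apply Matrix.ext
    intro i j
    have he : (Matrix.SpecialLinearGroup.map (polyMap F) δ₀).1 i j = polyMap F (δ₀.1 i j) := by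
      simp [Matrix.SpecialLinearGroup.map_apply_coe]
    have hone : (1 : Matrix (Fin 3) (Fin 3) (Kv F)) i j
        = polyMap F ((1 : Matrix (Fin 3) (Fin 3) (Polynomial F)) i j) := by
      by_cases hij : i = j
      · simp [hij, Matrix.one_apply]
      · simp [Matrix.one_apply, hij]
    have hvij := hv i j
    rw [he, hone, ← map_sub] at hvij
    have h1 := polyMap_eq_zero_of_val_lt F _ hvij
    have h2 := sub_eq_zero.mp h1
    simpa using h2
  rw [hδ₀, map_one]

/-- The closed unit ball of `Kv F` is compact when `F` is finite. -/
lemma ball_compact [Fintype F] : IsCompact {f : Kv F | Valued.v f ≤ (1 : ℤₘ₀)} := by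
  rw [isCompact_iff_totallyBounded_isComplete]
  constructor
  · -- totally bounded
    intro d hd
    obtain ⟨γ, hγ0, hγ⟩ := (unif_basis F).mem_iff.mp hd
    obtain ⟨m, hm⟩ : ∃ m : Multiplicative ℤ, (m : ℤₘ₀) = _ := ⟨_, WithZero.coe_unzero hγ0⟩
    set n : ℕ := (Multiplicative.toAdd m).natAbs + 1 with hn
    have hlt : (↑(Multiplicative.ofAdd (-(n : ℤ))) : ℤₘ₀) < ↑γ := by
      rw [← hm, WithZero.coe_lt_coe, ← Multiplicative.toAdd_lt]
      simp only [toAdd_ofAdd]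
      omega
    refine ⟨(fun c : Fin n → F => ∑ i : Fin n, (HahnSeries.single (i : ℤ) (c i) : Kv F)) ''
      Set.univ, Set.Finite.image _ Set.finite_univ, ?_⟩
    intro x hx
    simp only [Set.mem_setOf_eq] at hx
    have hxc : ∀ k : ℤ, k < 0 → x.coeff k = 0 := by
      intro k hk
      refine (LaurentSeries.valuation_le_iff_coeff_lt_eq_zero F (D := 0)).mp ?_ k hk
      simpa using hx
    set y : Kv F := ∑ i : Fin n, (HahnSeries.single (i : ℤ) (x.coeff (i : ℤ)) : Kv F) with hy
    have hycoeff : ∀ k : ℤ, y.coeff k = if 0 ≤ k ∧ k < n then x.coeff k else 0 := by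
      intro k
      have : y.coeff k = coeffHom F k y := rfl
      rw [this, hy, map_sum]
      simp only [coeffHom, AddMonoidHom.coe_mk, ZeroHom.coe_mk, HahnSeries.coeff_single]
      by_cases hk : 0 ≤ k ∧ k < n
      · have hkn : k.toNat < n := by omega
        rw [Finset.sum_eq_single (⟨k.toNat, hkn⟩ : Fin n)]
        · simp only [Fin.val_mk]
          rw [if_pos (by omega), Int.toNat_of_nonneg hk.1]
          rw [if_pos hk]
        · intro b _ hb
          rw [if_neg]
          intro hc
          apply hb
          apply Fin.ext
          simp only [Fin.val_mk]
          omega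
        · intro hmem
          exact absurd (Finset.mem_univ _) hmem
      · rw [if_neg hk]
        apply Finset.sum_eq_zero
        intro i _
        rw [if_neg]
        intro hc
        apply hk
        constructor <;> [omega; omega]
      done
    refine Set.mem_iUnion₂.mpr ⟨y, ⟨(fun i : Fin n => x.coeff (i : ℤ)), Set.mem_univ _, rfl⟩, ?_⟩
    apply hγ
    simp only [Set.mem_setOf_eq]
    calc Valued.v (y - x) ≤ ↑(Multiplicative.ofAdd (-(n : ℤ))) := by
          apply (LaurentSeries.valuation_le_iff_coeff_lt_eq_zero F).mpr
          intro k hk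
          rw [HahnSeries.coeff_sub, hycoeff k]
          by_cases h0 : 0 ≤ k
          · rw [if_pos ⟨h0, hk⟩]; simp
          · rw [if_neg (by omega), hxc k (by omega)]; simp
      _ < ↑γ := hlt
  · -- complete
    have hcl : IsClosed ((Valued.v.integer : Subring (Kv F)) : Set (Kv F)) :=
      AddSubgroup.isClosed_of_isOpen (Valued.v.integer : Subring (Kv F)).toAddSubgroup
        (Valued.isOpen_integer (Kv F))
    exact hcl.isComplete

instance sl3TopGroup : IsTopologicalGroup (SL3 F) where
  continuous_mul := by
    apply continuous_induced_rng.2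
    have h : (fun p : SL3 F × SL3 F => ((p.1 * p.2 : SL3 F) : Matrix (Fin 3) (Fin 3) (Kv F)))
        = fun p : SL3 F × SL3 F => ((p.1 : Matrix (Fin 3) (Fin 3) (Kv F))
          * (p.2 : Matrix (Fin 3) (Fin 3) (Kv F))) := by
      funext p
      exact Matrix.SpecialLinearGroup.coe_mul p.1 p.2
    show Continuous fun p : SL3 F × SL3 F => ((p.1 * p.2 : SL3 F) : Matrix (Fin 3) (Fin 3) (Kv F))
    rw [h]
    exact (continuous_subtype_val.comp continuous_fst).matrix_mul
      (continuous_subtype_val.comp continuous_snd)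
  continuous_inv := by
    apply continuous_induced_rng.2
    have h : (fun g : SL3 F => ((g⁻¹ : SL3 F) : Matrix (Fin 3) (Fin 3) (Kv F)))
        = fun g : SL3 F => ((g : Matrix (Fin 3) (Fin 3) (Kv F)).adjugate) := by
      funext g
      exact Matrix.SpecialLinearGroup.coe_inv g
    show Continuous fun g : SL3 F => ((g⁻¹ : SL3 F) : Matrix (Fin 3) (Fin 3) (Kv F))
    rw [h]
    exact continuous_subtype_val.matrix_adjugate

/-- The diagonal element `diag(tⁿ, 1, t⁻ⁿ)` for `t = X`. -/
def dEl (n : ℕ) : SL3 F :=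
  ⟨!![(HahnSeries.single (n : ℤ) 1 : Kv F), 0, 0; 0, 1, 0; 0, 0,
      (HahnSeries.single (-(n : ℤ)) 1 : Kv F)], by
    rw [Matrix.det_fin_three]
    simp [HahnSeries.single_mul_single, HahnSeries.single_zero_one]⟩

def dInv (n : ℕ) : SL3 F :=
  ⟨!![(HahnSeries.single (-(n : ℤ)) 1 : Kv F), 0, 0; 0, 1, 0; 0, 0,
      (HahnSeries.single (n : ℤ) 1 : Kv F)], by
    rw [Matrix.det_fin_three]
    simp [HahnSeries.single_mul_single, HahnSeries.single_zero_one]⟩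

lemma dEl_mul_dInv (n : ℕ) : dEl F n * dInv F n = 1 := by
  apply Subtype.ext
  rw [Matrix.SpecialLinearGroup.coe_mul, Matrix.SpecialLinearGroup.coe_one]
  show ((!![(HahnSeries.single (n : ℤ) 1 : Kv F), 0, 0; 0, 1, 0; 0, 0,
      (HahnSeries.single (-(n : ℤ)) 1 : Kv F)]) * (!![(HahnSeries.single (-(n : ℤ)) 1 : Kv F), 0, 0;
      0, 1, 0; 0, 0, (HahnSeries.single (n : ℤ) 1 : Kv F)])) = 1
  funext i j
  fin_cases i <;> fin_cases j <;>
    simp [Matrix.mul_apply, Fin.sum_univ_three, HahnSeries.single_mul_single,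
      HahnSeries.single_zero_one, Matrix.one_apply, Matrix.vecHead, Matrix.vecTail]

lemma dInv_eq (n : ℕ) : dInv F n = (dEl F n)⁻¹ :=
  eq_inv_of_mul_eq_one_right (dEl_mul_dInv F n)

lemma tendsto_single_mul (a : Kv F) :
    Tendsto (fun n : ℕ => (HahnSeries.single (n : ℤ) (1 : F) : Kv F) * a) atTop (𝓝 0) := by
  rw [(nhds_zero_basis F).tendsto_right_iff]
  intro γ hγ0
  rcases eq_or_ne a 0 with rfl | ha
  · filter_upwards with n
    simp only [Set.mem_setOf_eq, mul_zero, map_zero]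
    exact zero_lt_iff.mpr hγ0
  · obtain ⟨m, hm⟩ := val_cases F a ha
    obtain ⟨m', hm'⟩ : ∃ m : Multiplicative ℤ, (m : ℤₘ₀) = _ := ⟨_, WithZero.coe_unzero hγ0⟩
    filter_upwards [eventually_ge_atTop (Multiplicative.toAdd m - Multiplicative.toAdd m' + 1).toNat]
      with n hn
    have hn' : Multiplicative.toAdd m - Multiplicative.toAdd m' + 1 ≤ (n : ℤ) := by
      have := Int.self_le_toNat (Multiplicative.toAdd m - Multiplicative.toAdd m' + 1)
      exact le_trans this (by exact_mod_cast hn)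
    simp only [Set.mem_setOf_eq, map_mul, hm, ← hm']
    rw [LaurentSeries.valuation_single_zpow, WithZero.exp, ← WithZero.coe_mul, WithZero.coe_lt_coe,
      ← ofAdd_toAdd m, ← ofAdd_toAdd m', ← ofAdd_add, Multiplicative.ofAdd_lt]
    omega

lemma tendsto_mul_single (a : Kv F) :
    Tendsto (fun n : ℕ => a * (HahnSeries.single (n : ℤ) (1 : F) : Kv F)) atTop (𝓝 0) := by
  have h : (fun n : ℕ => a * (HahnSeries.single (n : ℤ) (1 : F) : Kv F))
      = fun n : ℕ => (HahnSeries.single (n : ℤ) (1 : F) : Kv F) * a :=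
    funext fun n => mul_comm _ _
  rw [h]
  exact tendsto_single_mul F a

lemma tendsto_single_mul_single (a : Kv F) :
    Tendsto (fun n : ℕ => (HahnSeries.single (n : ℤ) (1 : F) : Kv F) * a
      * (HahnSeries.single (n : ℤ) (1 : F) : Kv F)) atTop (𝓝 0) := by
  have h : ∀ n : ℕ, (HahnSeries.single (n : ℤ) (1 : F) : Kv F) * a
      * (HahnSeries.single (n : ℤ) (1 : F) : Kv F)
      = (HahnSeries.single ((2 * n : ℕ) : ℤ) (1 : F) : Kv F) * a := by
    intro n
    rw [mul_right_comm, HahnSeries.single_mul_single, mul_one]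
    congr 2
    push_cast
    ring
  simp_rw [h]
  exact (tendsto_single_mul F a).comp
    (tendsto_atTop_mono (fun n => by omega : ∀ n : ℕ, n ≤ 2 * n) tendsto_id)

lemma conj_coe (n : ℕ) (g : SL3 F) (hg : IsUpperUnip F g) :
    ((dEl F n * g * dInv F n : SL3 F) : Matrix (Fin 3) (Fin 3) (Kv F)) =
      !![1, (HahnSeries.single (n : ℤ) 1 : Kv F) * g.1 0 1,
          (HahnSeries.single (n : ℤ) 1 : Kv F) * g.1 0 2 * (HahnSeries.single (n : ℤ) 1 : Kv F);
         0, 1, g.1 1 2 * (HahnSeries.single (n : ℤ) 1 : Kv F);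
         0, 0, 1] := by
  obtain ⟨h00, h11, h22, h10, h20, h21⟩ := hg
  have hγ : (g : Matrix (Fin 3) (Fin 3) (Kv F)) = !![1, g.1 0 1, g.1 0 2; 0, 1, g.1 1 2; 0, 0, 1] := by
    funext i j
    fin_cases i <;> fin_cases j <;>
      simp [h00, h11, h22, h10, h20, h21, Matrix.vecHead, Matrix.vecTail]
  rw [Matrix.SpecialLinearGroup.coe_mul, Matrix.SpecialLinearGroup.coe_mul, hγ]
  show ((!![(HahnSeries.single (n : ℤ) 1 : Kv F), 0, 0; 0, 1, 0; 0, 0,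
      (HahnSeries.single (-(n : ℤ)) 1 : Kv F)]) * _ * (!![(HahnSeries.single (-(n : ℤ)) 1 : Kv F),
      0, 0; 0, 1, 0; 0, 0, (HahnSeries.single (n : ℤ) 1 : Kv F)])) = _
  funext i j
  fin_cases i <;> fin_cases j <;>
    simp [Matrix.mul_apply, Fin.sum_univ_three, HahnSeries.single_mul_single,
      HahnSeries.single_zero_one, Matrix.vecHead, Matrix.vecTail]

lemma tendsto_matrix_entries (f01 f02 f12 : ℕ → Kv F) (h01 : Tendsto f01 atTop (𝓝 0))
    (h02 : Tendsto f02 atTop (𝓝 0)) (h12 : Tendsto f12 atTop (𝓝 0)) :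
    Tendsto (fun n => (!![1, f01 n, f02 n; 0, 1, f12 n; 0, 0, 1] : Matrix (Fin 3) (Fin 3) (Kv F)))
      atTop (𝓝 (1 : Matrix (Fin 3) (Fin 3) (Kv F))) := by
  rw [Matrix.one_fin_three]
  refine tendsto_pi_nhds.2 fun i => tendsto_pi_nhds.2 fun j => ?_
  fin_cases i <;> fin_cases j <;> simp <;> first | exact tendsto_const_nhds | assumption

lemma tendsto_conj (g : SL3 F) (hg : IsUpperUnip F g) :
    Tendsto (fun n : ℕ => dEl F n * g * dInv F n) atTop (𝓝 (1 : SL3 F)) := by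
  have hmat : Tendsto (fun n : ℕ => ((dEl F n * g * dInv F n : SL3 F)
      : Matrix (Fin 3) (Fin 3) (Kv F))) atTop (𝓝 (1 : Matrix (Fin 3) (Fin 3) (Kv F))) := by
    simp_rw [conj_coe F _ g hg]
    exact tendsto_matrix_entries F _ _ _ (tendsto_single_mul F _)
      (tendsto_single_mul_single F _) (tendsto_mul_single F _)
  exact tendsto_subtype_rng.mpr (by rw [Matrix.SpecialLinearGroup.coe_one]; exact hmat)

lemma ball_add_compact [Fintype F] (c : Kv F) :
    IsCompact {x : Kv F | Valued.v (x - c) ≤ (1 : ℤₘ₀)} := by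
  have h : {x : Kv F | Valued.v (x - c) ≤ (1 : ℤₘ₀)}
      = (fun u => u + c) '' {f : Kv F | Valued.v f ≤ (1 : ℤₘ₀)} := by
    ext x
    constructor
    · intro hx
      exact ⟨x - c, hx, by ring⟩
    · rintro ⟨u, hu, rfl⟩
      simpa using hu
  rw [h]
  exact (ball_compact F).image (continuous_add_right c)

lemma closed_ball_nhds (c : Kv F) : {x : Kv F | Valued.v (x - c) ≤ (1 : ℤₘ₀)} ∈ 𝓝 c := by
  rw [Valued.mem_nhds]
  refine ⟨1, fun y hy => ?_⟩
  simp only [Set.mem_setOf_eq] at hy ⊢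
  rw [Units.val_one, Valuation.restrict_lt_one_iff] at hy
  exact le_of_lt hy

lemma open_ball_nhds (c : Kv F) : {x : Kv F | Valued.v (x - c) < (1 : ℤₘ₀)} ∈ 𝓝 c := by
  rw [Valued.mem_nhds]
  refine ⟨1, fun y hy => ?_⟩
  simp only [Set.mem_setOf_eq] at hy ⊢
  rwa [Units.val_one, Valuation.restrict_lt_one_iff] at hy

lemma sl3_closed : IsClosed {A : Matrix (Fin 3) (Fin 3) (Kv F) | A.det = 1} :=
  isClosed_eq (continuous_id.matrix_det) continuous_const

lemma exists_compact_nbhd [Fintype F] (g : SL3 F) :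
    ∃ C : Set (SL3 F), IsCompact C ∧ C ∈ 𝓝 g := by
  set C' : Set (Matrix (Fin 3) (Fin 3) (Kv F)) :=
    Set.univ.pi fun i => Set.univ.pi fun j =>
      {x : Kv F | Valued.v (x - (g : Matrix (Fin 3) (Fin 3) (Kv F)) i j) ≤ (1 : ℤₘ₀)} with hC'def
  have hC' : IsCompact C' :=
    isCompact_univ_pi fun i => isCompact_univ_pi fun j => ball_add_compact F _
  have hnb : C' ∈ 𝓝 (g : Matrix (Fin 3) (Fin 3) (Kv F)) := by
    apply set_pi_mem_nhds Set.finite_univ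
    intro i _
    apply set_pi_mem_nhds Set.finite_univ
    intro j _
    exact closed_ball_nhds F _
  refine ⟨Subtype.val ⁻¹' C', ?_, ?_⟩
  · apply Topology.IsEmbedding.subtypeVal.isCompact_iff.mpr
    have himg : (Subtype.val '' (Subtype.val ⁻¹' C') : Set (Matrix (Fin 3) (Fin 3) (Kv F)))
        = C' ∩ Set.range (Subtype.val : SL3 F → Matrix (Fin 3) (Fin 3) (Kv F)) :=
      Set.image_preimage_eq_inter_range
    refine (congrArg IsCompact himg).mpr ?_
    apply hC'.inter_right
    have : Set.range (Subtype.val : SL3 F → Matrix (Fin 3) (Fin 3) (Kv F))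
        = {A : Matrix (Fin 3) (Fin 3) (Kv F) | A.det = 1} := Subtype.range_coe
    rw [this]
    exact sl3_closed F
  · exact continuous_subtype_val.continuousAt.preimage_mem_nhds hnb

/-- An isolating neighborhood of the identity in `SL3`. -/
def Vnbhd : Set (SL3 F) :=
  Subtype.val ⁻¹' (Set.univ.pi fun i => Set.univ.pi fun j =>
    {x : Kv F | Valued.v (x - (1 : Matrix (Fin 3) (Fin 3) (Kv F)) i j) < (1 : ℤₘ₀)})

lemma Vnbhd_mem : Vnbhd F ∈ 𝓝 (1 : SL3 F) := by
  apply continuous_subtype_val.continuousAt.preimage_mem_nhds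
  rw [Matrix.SpecialLinearGroup.coe_one]
  apply set_pi_mem_nhds Set.finite_univ
  intro i _
  apply set_pi_mem_nhds Set.finite_univ
  intro j _
  exact open_ball_nhds F _

lemma Vnbhd_spec (x : SL3 F) (hx : x ∈ Vnbhd F) (i j : Fin 3) :
    Valued.v ((x : Matrix (Fin 3) (Fin 3) (Kv F)) i j
      - (1 : Matrix (Fin 3) (Fin 3) (Kv F)) i j) < (1 : ℤₘ₀) := by
  rw [Vnbhd] at hx
  exact hx i (Set.mem_univ _) j (Set.mem_univ _)

lemma single_neg_eq_inv (n : ℕ) :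
    (HahnSeries.single (-(n : ℤ)) (1 : F) : Kv F) = (HahnSeries.single ((n : ℤ)) (1 : F) : Kv F)⁻¹ := by
  rw [HahnSeries.inv_single, inv_one]

end Stmt7Aux

/-- If the `D`-orbit of `y` is relatively compact, then the stabilizer of `y` meets the
upper triangular unipotent group `W` only in the identity, and for every non-compact closed
subgroup `U ⊆ W` the quotient `U/(U ∩ G_y)` is not compact. -/
theorem stmt_7 (F : Type) [Field F] [Fintype F] (hodd : ringChar F ≠ 2)
    (y : SL3 F ⧸ Gamma F)
    (hD : IsCompact (closure {z : SL3 F ⧸ Gamma F | ∃ g : SL3 F,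
      (∃ t : Kv F, t ≠ 0 ∧ g.1 = !![t, 0, 0; 0, 1, 0; 0, 0, t⁻¹]) ∧ z = g • y})) :
    (∀ g : SL3 F, IsUpperUnip F g → g • y = y → g = 1) ∧
      (∀ U : Subgroup (SL3 F), IsClosed (U : Set (SL3 F)) →
        (∀ u ∈ U, IsUpperUnip F u) → ¬ IsCompact (U : Set (SL3 F)) →
        ¬ CompactSpace
          (↥U ⧸ (MulAction.stabilizer (SL3 F) y).subgroupOf U)) := by
  classical
  open Stmt7Aux in
  obtain ⟨h, rfl⟩ := QuotientGroup.mk_surjective y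
  have hsmul : ∀ g : SL3 F, g • (QuotientGroup.mk h : SL3 F ⧸ Gamma F)
      = QuotientGroup.mk (g * h) := by
    intro g
    rw [MulAction.Quotient.smul_mk]
    rfl
  have key : ∀ g : SL3 F, IsUpperUnip F g →
      g • (QuotientGroup.mk h : SL3 F ⧸ Gamma F) = QuotientGroup.mk h → g = 1 := by
    intro γ hγW hγy
    rw [hsmul] at hγy
    have hδ₀ : (γ * h)⁻¹ * h ∈ Gamma F := QuotientGroup.eq.mp hγy
    -- the sequence of points in the orbit
    have hmem : ∀ n : ℕ, (QuotientGroup.mk (Stmt7Aux.dEl F n * h) : SL3 F ⧸ Gamma F) ∈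
        {z : SL3 F ⧸ Gamma F | ∃ g : SL3 F,
          (∃ t : Kv F, t ≠ 0 ∧ g.1 = !![t, 0, 0; 0, 1, 0; 0, 0, t⁻¹])
            ∧ z = g • (QuotientGroup.mk h : SL3 F ⧸ Gamma F)} := by
      intro n
      refine ⟨Stmt7Aux.dEl F n, ⟨HahnSeries.single (n : ℤ) 1,
        HahnSeries.single_ne_zero one_ne_zero, ?_⟩, ?_⟩
      · show (!![(HahnSeries.single (n : ℤ) 1 : Kv F), 0, 0; 0, 1, 0; 0, 0,
          (HahnSeries.single (-(n : ℤ)) 1 : Kv F)]) = _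
        rw [Stmt7Aux.single_neg_eq_inv]
      · rw [hsmul]
    have hsub : Filter.map (fun n : ℕ => (QuotientGroup.mk (Stmt7Aux.dEl F n * h)
        : SL3 F ⧸ Gamma F)) Filter.atTop ≤ Filter.principal (closure
          {z : SL3 F ⧸ Gamma F | ∃ g : SL3 F,
            (∃ t : Kv F, t ≠ 0 ∧ g.1 = !![t, 0, 0; 0, 1, 0; 0, 0, t⁻¹])
              ∧ z = g • (QuotientGroup.mk h : SL3 F ⧸ Gamma F)}) := by
      rw [Filter.le_principal_iff, Filter.mem_map]
      exact Filter.Eventually.of_forall fun n => subset_closure (hmem n)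
    obtain ⟨z, hzK, hz⟩ := hD.exists_clusterPt hsub
    obtain ⟨g₁, rfl⟩ := QuotientGroup.mk_surjective z
    obtain ⟨C, hCcpt, hCnb⟩ := Stmt7Aux.exists_compact_nbhd F g₁
    have hopen : IsOpenMap (QuotientGroup.mk : SL3 F → SL3 F ⧸ Gamma F) :=
      QuotientGroup.isOpenMap_coe
    have himg : QuotientGroup.mk '' C ∈ 𝓝 (QuotientGroup.mk g₁ : SL3 F ⧸ Gamma F) :=
      hopen.image_mem_nhds hCnb
    have hz' : MapClusterPt (QuotientGroup.mk g₁ : SL3 F ⧸ Gamma F) Filter.atTop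
        (fun n : ℕ => (QuotientGroup.mk (Stmt7Aux.dEl F n * h) : SL3 F ⧸ Gamma F)) := hz
    have hfreq : ∃ᶠ n in Filter.atTop, (QuotientGroup.mk (Stmt7Aux.dEl F n * h)
        : SL3 F ⧸ Gamma F) ∈ QuotientGroup.mk '' C := (mapClusterPt_iff_frequently.mp hz') _ himg
    set A := {n : ℕ | (QuotientGroup.mk (Stmt7Aux.dEl F n * h) : SL3 F ⧸ Gamma F)
      ∈ QuotientGroup.mk '' C} with hAdef
    have hL : (Filter.atTop ⊓ Filter.principal A).NeBot :=
      Filter.frequently_iff_neBot.mp hfreq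
    have hgetc : ∀ n : ℕ, ∃ x : SL3 F, x ∈ C ∧ (n ∈ A →
        QuotientGroup.mk x = (QuotientGroup.mk (Stmt7Aux.dEl F n * h) : SL3 F ⧸ Gamma F)) := by
      intro n
      by_cases hn : n ∈ A
      · obtain ⟨x, hxC, hxeq⟩ := hn
        exact ⟨x, hxC, fun _ => hxeq⟩
      · exact ⟨g₁, mem_of_mem_nhds hCnb, fun hn' => absurd hn' hn⟩
    choose c hcC hceq using hgetc
    have hmapc : Filter.map c (Filter.atTop ⊓ Filter.principal A) ≤ Filter.principal C := by
      rw [Filter.le_principal_iff, Filter.mem_map]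
      exact Filter.Eventually.of_forall fun n => hcC n
    obtain ⟨g₀, hg₀C, hcl0⟩ := hCcpt.exists_clusterPt hmapc
    set N := (Filter.atTop ⊓ Filter.principal A) ⊓ Filter.comap c (𝓝 g₀) with hNdef
    have hNne : N.NeBot := by
      have h1 : (𝓝 g₀ ⊓ Filter.map c (Filter.atTop ⊓ Filter.principal A)).NeBot := hcl0
      have h2 : (Filter.map c (Filter.atTop ⊓ Filter.principal A) ⊓ 𝓝 g₀).NeBot := by
        rwa [inf_comm] at h1
      rw [← Filter.push_pull] at h2
      exact (Filter.map_neBot_iff c).mp h2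
    have hcN : Filter.Tendsto c N (𝓝 g₀) := Filter.tendsto_comap.mono_left inf_le_right
    have hwN : Filter.Tendsto (fun n : ℕ => Stmt7Aux.dEl F n * γ * (Stmt7Aux.dEl F n)⁻¹) N
        (𝓝 (1 : SL3 F)) := by
      have h1 := Stmt7Aux.tendsto_conj F γ hγW
      have h2 : (fun n : ℕ => Stmt7Aux.dEl F n * γ * Stmt7Aux.dInv F n)
          = fun n : ℕ => Stmt7Aux.dEl F n * γ * (Stmt7Aux.dEl F n)⁻¹ := by
        funext n
        rw [Stmt7Aux.dInv_eq]
      rw [h2] at h1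
      exact h1.mono_left (le_trans inf_le_left inf_le_left)
    have hconj : Filter.Tendsto (fun n : ℕ => (c n)⁻¹
        * (Stmt7Aux.dEl F n * γ * (Stmt7Aux.dEl F n)⁻¹) * c n) N (𝓝 (g₀⁻¹ * 1 * g₀)) :=
      (hcN.inv.mul hwN).mul hcN
    rw [show g₀⁻¹ * 1 * g₀ = (1 : SL3 F) by group] at hconj
    have hev1 : ∀ᶠ n in N, ((c n)⁻¹ * (Stmt7Aux.dEl F n * γ * (Stmt7Aux.dEl F n)⁻¹) * c n)
        ∈ Stmt7Aux.Vnbhd F := hconj.eventually_mem (Stmt7Aux.Vnbhd_mem F)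
    have hev2 : ∀ᶠ n in N, n ∈ A := by
      have hNA : N ≤ Filter.principal A := le_trans inf_le_left inf_le_right
      exact hNA (Filter.mem_principal_self A)
    obtain ⟨n, hnV, hnA⟩ := (hev1.and hev2).exists
    have hδmem : (c n)⁻¹ * (Stmt7Aux.dEl F n * h) ∈ Gamma F :=
      QuotientGroup.eq.mp (hceq n hnA)
    have hfactor : (c n)⁻¹ * (Stmt7Aux.dEl F n * γ * (Stmt7Aux.dEl F n)⁻¹) * c n
        = ((c n)⁻¹ * (Stmt7Aux.dEl F n * h)) * ((γ * h)⁻¹ * h)⁻¹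
          * ((c n)⁻¹ * (Stmt7Aux.dEl F n * h))⁻¹ := by
      group
    have hΓ : (c n)⁻¹ * (Stmt7Aux.dEl F n * γ * (Stmt7Aux.dEl F n)⁻¹) * c n ∈ Gamma F := by
      rw [hfactor]
      exact (Gamma F).mul_mem ((Gamma F).mul_mem hδmem ((Gamma F).inv_mem hδ₀))
        ((Gamma F).inv_mem hδmem)
    have hone := Stmt7Aux.gamma_discrete F _ hΓ
      (fun i j => Stmt7Aux.Vnbhd_spec F _ hnV i j)
    have hw1 : Stmt7Aux.dEl F n * γ * (Stmt7Aux.dEl F n)⁻¹ = 1 := by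
      calc Stmt7Aux.dEl F n * γ * (Stmt7Aux.dEl F n)⁻¹
          = c n * ((c n)⁻¹ * (Stmt7Aux.dEl F n * γ * (Stmt7Aux.dEl F n)⁻¹) * c n) * (c n)⁻¹ := by
            group
        _ = 1 := by rw [hone]; group
    calc γ = (Stmt7Aux.dEl F n)⁻¹
          * (Stmt7Aux.dEl F n * γ * (Stmt7Aux.dEl F n)⁻¹) * Stmt7Aux.dEl F n := by group
      _ = 1 := by rw [hw1]; group
  refine ⟨key, ?_⟩
  intro U hUclosed hUunip hUncpt hcpt
  apply hUncpt
  set H := (MulAction.stabilizer (SL3 F) (QuotientGroup.mk h : SL3 F ⧸ Gamma F)).subgroupOf U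
    with hHdef
  have hinj : Function.Injective (QuotientGroup.mk : ↥U → ↥U ⧸ H) := by
    intro a b hab
    have h1 : a⁻¹ * b ∈ H := QuotientGroup.eq.mp hab
    have h2 : ((a⁻¹ * b : ↥U) : SL3 F) ∈ MulAction.stabilizer (SL3 F)
        (QuotientGroup.mk h : SL3 F ⧸ Gamma F) := Subgroup.mem_subgroupOf.mp h1
    have h3 : ((a⁻¹ * b : ↥U) : SL3 F) = 1 := by
      apply key _ (hUunip _ (a⁻¹ * b).2)
      exact MulAction.mem_stabilizer_iff.mp h2
    have h4 : (a⁻¹ * b : ↥U) = 1 := Subtype.ext (by simpa using h3)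
    exact inv_mul_eq_one.mp h4
  let e : ↥U ≃ (↥U ⧸ H) := Equiv.ofBijective _ ⟨hinj, QuotientGroup.mk_surjective⟩
  have hhomeo : ↥U ≃ₜ (↥U ⧸ H) :=
    Equiv.toHomeomorphOfContinuousOpen e continuous_quotient_mk' QuotientGroup.isOpenMap_coe
  have : CompactSpace ↥U := hhomeo.symm.compactSpace
  exact isCompact_iff_compactSpace.mpr this

end
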